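/- arXiv:1709.00617 — 2 statements merged into one kernel-verified Lean document; each statement's English description precedes it below -/
import Mathlib

section
/- Let t ≥ 2 and m ≥ 2 be integers, and let λ be a (t, mt−1)-core partition with distinct parts. Then β(λ) ⊆ {1, 2, …, mt−2}; in particular, n_i(λ) ≤ m for every 1 ≤ i ≤ t−2, n_{t−1}(λ) ≤ m−1, and n_i(λ)·n_{i+1}(λ) = 0 for every 1 ≤ i ≤ t−2. -/
/-- A partition: a finite weakly decreasing list of positive integers. -/
structure Partn where
  parts : List ℕ
  pos : ∀ p ∈ parts, 0 < p
  sorted : parts.Pairwise (· ≥ ·)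

namespace Partn

/-- The size of a partition: the sum of its parts. -/
def size (l : Partn) : ℕ := l.parts.sum

/-- The number of rows `k` (0-indexed) with `λ_k ≥ j` (the length of column `j`). -/
def colLen (l : Partn) (j : ℕ) : ℕ := (l.parts.filter (fun p => j ≤ p)).length

/-- The hook length of the box in row `i` (0-indexed) and column `j` (1-indexed):
`λ_i − j + #{k : λ_k ≥ j} − i + 1` (with 1-indexed rows). -/
def hook (l : Partn) (i j : ℕ) : ℕ :=
  (l.parts.getD i 0 - j) + (l.colLen j - (i + 1)) + 1

/-- A partition is a `t`-core if none of its hook lengths is divisible by `t`. -/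
def IsCore (t : ℕ) (l : Partn) : Prop :=
  ∀ i j : ℕ, i < l.parts.length → 1 ≤ j → j ≤ l.parts.getD i 0 → ¬ (t ∣ l.hook i j)

/-- A partition has distinct parts if its parts are strictly decreasing. -/
def DistinctParts (l : Partn) : Prop := l.parts.Pairwise (· > ·)

/-- The β-set of a partition: `{λ_i + ℓ − i : 1 ≤ i ≤ ℓ}` (1-indexed). -/
def betaSet (l : Partn) : Finset ℕ :=
  (Finset.range l.parts.length).image
    (fun i => l.parts.getD i 0 + (l.parts.length - 1 - i))

/-- `nFn t i l` is the number of elements of the β-set of `l` congruent to `i` mod `t`. -/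
def nFn (t i : ℕ) (l : Partn) : ℕ :=
  (l.betaSet.filter (fun x => x % t = i)).card

/-- auxiliary: the β-value at (0-indexed) row `i`. -/
def bv (l : Partn) (i : ℕ) : ℕ := l.parts.getD i 0 + (l.parts.length - 1 - i)

lemma mem_betaSet {l : Partn} {x : ℕ} :
    x ∈ l.betaSet ↔ ∃ i, i < l.parts.length ∧ l.bv i = x := by
  simp [betaSet, bv]

lemma part_pos (l : Partn) {i : ℕ} (hi : i < l.parts.length) : 1 ≤ l.parts.getD i 0 := by
  rw [List.getD_eq_getElem _ _ hi]
  exact l.pos _ (List.getElem_mem hi)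

lemma parts_anti (l : Partn) {i k : ℕ} (hik : i ≤ k) (hk : k < l.parts.length) :
    l.parts.getD k 0 ≤ l.parts.getD i 0 := by
  rcases eq_or_lt_of_le hik with rfl | hlt
  · exact le_refl _
  · have hi : i < l.parts.length := lt_trans hlt hk
    rw [List.getD_eq_getElem _ _ hi, List.getD_eq_getElem _ _ hk]
    exact l.sorted.rel_get_of_lt (a := ⟨i, hi⟩) (b := ⟨k, hk⟩) hlt

lemma parts_strict (l : Partn) (hd : l.DistinctParts) {i k : ℕ} (hik : i < k)
    (hk : k < l.parts.length) : l.parts.getD k 0 < l.parts.getD i 0 := by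
  have hi : i < l.parts.length := lt_trans hik hk
  rw [List.getD_eq_getElem _ _ hi, List.getD_eq_getElem _ _ hk]
  exact hd.rel_get_of_lt (a := ⟨i, hi⟩) (b := ⟨k, hk⟩) hik

lemma bv_add_le (l : Partn) {i k : ℕ} (hik : i ≤ k) (hk : k < l.parts.length) :
    l.bv k + (k - i) ≤ l.bv i := by
  have h := l.parts_anti hik hk
  unfold bv
  omega

lemma bv_lt (l : Partn) {i k : ℕ} (hik : i < k) (hk : k < l.parts.length) :
    l.bv k < l.bv i := by
  have := l.bv_add_le (le_of_lt hik) hk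
  omega

lemma one_le_bv (l : Partn) {i : ℕ} (hi : i < l.parts.length) : 1 ≤ l.bv i := by
  have := l.part_pos hi
  unfold bv
  omega

lemma bv_gap (l : Partn) (hd : l.DistinctParts) {i k : ℕ} (hik : i < k)
    (hk : k < l.parts.length) : l.bv k + 2 ≤ l.bv i := by
  have h1 : i + 1 ≤ k := hik
  have h2 := l.bv_add_le h1 hk
  have h3 : i + 1 < l.parts.length := lt_of_le_of_lt h1 hk
  have h4 := l.parts_strict hd (show i < i + 1 by omega) h3
  unfold bv at *
  omega

lemma not_consec (l : Partn) (hd : l.DistinctParts) {x : ℕ} (hx : x ∈ l.betaSet)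
    (hx1 : x + 1 ∈ l.betaSet) : False := by
  rw [mem_betaSet] at hx hx1
  obtain ⟨k, hk, hbk⟩ := hx
  obtain ⟨i, hi, hbi⟩ := hx1
  rcases lt_trichotomy i k with h | rfl | h
  · have := l.bv_gap hd h hk; omega
  · omega
  · have := l.bv_lt h hi; omega

lemma length_filter_eq (p : ℕ → Bool) : ∀ L : List ℕ,
    (L.filter p).length
      = ((Finset.range L.length).filter (fun i => p (L.getD i 0) = true)).card
  | [] => by simp
  | a :: L => by
    rw [List.filter_cons, List.length_cons, Finset.card_filter, Finset.sum_range_succ']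
    simp only [List.getD_cons_succ, List.getD_cons_zero]
    rw [← Finset.card_filter, ← length_filter_eq p L]
    by_cases h : p a = true <;> simp [h]

/-- Key lemma: if `b < bv i` and `b ∉ β`, then `bv i - b` is a hook length in row `i`. -/
lemma exists_hook (l : Partn) {i b : ℕ} (hi : i < l.parts.length)
    (hb : b < l.bv i) (hbn : b ∉ l.betaSet) :
    ∃ j, 1 ≤ j ∧ j ≤ l.parts.getD i 0 ∧ l.hook i j = l.bv i - b := by
  set ℓ := l.parts.length with hℓ
  set A := (Finset.range ℓ).filter (fun k => l.bv k ≤ b) with hA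
  set s := A.card with hs
  have hsl : s ≤ ℓ := by
    have : A ⊆ Finset.range ℓ := Finset.filter_subset _ _
    simpa using Finset.card_le_card this
  have hsub : A ⊆ Finset.Ico (ℓ - s) ℓ := by
    intro k hk
    rw [hA, Finset.mem_filter, Finset.mem_range] at hk
    have hIcc : Finset.Ico k ℓ ⊆ A := by
      intro k' hk'
      rw [Finset.mem_Ico] at hk'
      rw [hA, Finset.mem_filter, Finset.mem_range]
      refine ⟨hk'.2, le_trans ?_ hk.2⟩
      have := l.bv_add_le hk'.1 hk'.2
      omega
    have hcard := Finset.card_le_card hIcc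
    rw [Nat.card_Ico] at hcard
    rw [Finset.mem_Ico]
    omega
  have hAeq : A = Finset.Ico (ℓ - s) ℓ := by
    apply Finset.eq_of_subset_of_card_le hsub
    rw [Nat.card_Ico]
    omega
  have hmem : ∀ k, k < ℓ → (l.bv k ≤ b ↔ ℓ - s ≤ k) := by
    intro k hk
    constructor
    · intro h
      have : k ∈ A := by rw [hA, Finset.mem_filter, Finset.mem_range]; exact ⟨hk, h⟩
      rw [hAeq, Finset.mem_Ico] at this
      exact this.1
    · intro h
      have : k ∈ A := by rw [hAeq, Finset.mem_Ico]; exact ⟨h, hk⟩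
      rw [hA, Finset.mem_filter] at this
      exact this.2
  have hsb : s ≤ b := by
    have hmap : ∀ k ∈ A, l.bv k ∈ Finset.Icc 1 b := by
      intro k hk
      rw [hA, Finset.mem_filter, Finset.mem_range] at hk
      rw [Finset.mem_Icc]
      exact ⟨l.one_le_bv hk.1, hk.2⟩
    have hinj : Set.InjOn l.bv ↑A := by
      intro k1 h1 k2 h2 he
      rw [hA, Finset.coe_filter] at h1 h2
      simp only [Set.mem_setOf_eq, Finset.mem_range] at h1 h2
      rcases lt_trichotomy k1 k2 with h | h | h
      · have := l.bv_lt h h2.1; omega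
      · exact h
      · have := l.bv_lt h h1.1; omega
    have := Finset.card_le_card_of_injOn l.bv hmap hinj
    rw [Nat.card_Icc] at this
    omega
  set j := b + 1 - s with hj
  have hnb : ∀ k, k < ℓ → l.bv k ≠ b := by
    intro k hk he
    exact hbn (mem_betaSet.mpr ⟨k, hk, he⟩)
  have hiff : ∀ k, k < ℓ → (j ≤ l.parts.getD k 0 ↔ k < ℓ - s) := by
    intro k hk
    constructor
    · intro h
      by_contra hc
      push_neg at hc
      have hls : ℓ - s < ℓ := lt_of_le_of_lt hc hk
      have h1 := l.bv_add_le hc hk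
      have h2 : l.bv (ℓ - s) ≤ b := (hmem _ hls).mpr (le_refl _)
      have h3 := hnb _ hls
      have h4 : l.bv k = l.parts.getD k 0 + (ℓ - 1 - k) := rfl
      have h5 : l.bv (ℓ - s) = l.parts.getD (ℓ - s) 0 + (ℓ - 1 - (ℓ - s)) := rfl
      omega
    · intro h
      have hls1 : ℓ - s - 1 < ℓ := by omega
      have hkls : k ≤ ℓ - s - 1 := by omega
      have h1 := l.bv_add_le hkls hls1
      have h2 : ¬ (l.bv (ℓ - s - 1) ≤ b) := by
        intro hc
        have := (hmem _ hls1).mp hc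
        omega
      have h4 : l.bv k = l.parts.getD k 0 + (ℓ - 1 - k) := rfl
      have h5 : l.bv (ℓ - s - 1) = l.parts.getD (ℓ - s - 1) 0 + (ℓ - 1 - (ℓ - s - 1)) := rfl
      omega
  have hcol : l.colLen j = ℓ - s := by
    unfold colLen
    rw [length_filter_eq]
    have : ((Finset.range ℓ).filter (fun k => (decide (j ≤ l.parts.getD k 0)) = true))
        = Finset.range (ℓ - s) := by
      ext k
      simp only [Finset.mem_filter, Finset.mem_range, decide_eq_true_eq]
      constructor
      · rintro ⟨hk, h⟩
        exact (hiff k hk).mp h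
      · intro h
        have hk : k < ℓ := by omega
        exact ⟨hk, (hiff k hk).mpr h⟩
    rw [this, Finset.card_range]
  have hils : i < ℓ - s := by
    have := hmem i hi
    omega
  have hji : j ≤ l.parts.getD i 0 := (hiff i hi).mpr hils
  refine ⟨j, by omega, hji, ?_⟩
  unfold hook
  rw [hcol]
  have h4 : l.bv i = l.parts.getD i 0 + (ℓ - 1 - i) := rfl
  omega

lemma zero_not_mem_betaSet (l : Partn) : (0 : ℕ) ∉ l.betaSet := by
  intro h
  rw [mem_betaSet] at h
  obtain ⟨i, hi, he⟩ := h
  have := l.one_le_bv hi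
  omega

lemma core_step (l : Partn) {t : ℕ} (ht : 1 ≤ t) (hc : l.IsCore t) {x : ℕ}
    (hx : x ∈ l.betaSet) (hle : t ≤ x) : x - t ∈ l.betaSet := by
  by_contra hbn
  obtain ⟨i, hi, he⟩ := mem_betaSet.mp hx
  have hb : x - t < l.bv i := by omega
  obtain ⟨j, hj1, hj2, hj3⟩ := l.exists_hook hi hb hbn
  apply hc i j hi hj1 hj2
  rw [hj3, he]
  have : x - (x - t) = t := by omega
  rw [this]

lemma core_iter (l : Partn) {t : ℕ} (ht : 1 ≤ t) (hc : l.IsCore t) {x : ℕ}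
    (hx : x ∈ l.betaSet) : ∀ k : ℕ, k * t ≤ x → x - k * t ∈ l.betaSet := by
  intro k
  induction k with
  | zero => simpa using hx
  | succ n ih =>
    intro hkt
    have h1 : n * t ≤ x := by
      have : n * t ≤ (n + 1) * t := by nlinarith
      omega
    have h2 := ih h1
    have h3 : t ≤ x - n * t := by
      have : (n + 1) * t = n * t + t := by ring
      omega
    have := l.core_step ht hc h2 h3
    have he : x - n * t - t = x - (n + 1) * t := by
      have : (n + 1) * t = n * t + t := by ring
      omega
    rwa [he] at this

end Partn

/-- The β-set of a `(t, mt−1)`-core partition with distinct parts lies in `{1, …, mt−2}`. -/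
theorem betaSet_subset_t_mt_sub_one (t m : ℕ) (ht : 2 ≤ t) (hm : 2 ≤ m) (lam : Partn)
    (hlam : (lam.IsCore t ∧ lam.IsCore (m * t - 1) ∧ lam.DistinctParts)) :
    lam.betaSet ⊆ Finset.Icc 1 (m * t - 2) ∧
      (∀ i : ℕ, 1 ≤ i → i ≤ t - 2 → Partn.nFn t i lam ≤ m) ∧
      Partn.nFn t (t - 1) lam ≤ m - 1 ∧
      ∀ i : ℕ, 1 ≤ i → i ≤ t - 2 → Partn.nFn t i lam * Partn.nFn t (i + 1) lam = 0 := by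
  obtain ⟨hct, hcmt, hd⟩ := hlam
  have htpos : 1 ≤ t := by omega
  have hmt : 4 ≤ m * t := by nlinarith
  -- one element of β: at least 1
  have hone : ∀ x ∈ lam.betaSet, 1 ≤ x := by
    intro x hx
    obtain ⟨i, hi, he⟩ := Partn.mem_betaSet.mp hx
    have := lam.one_le_bv hi
    omega
  have hsub : lam.betaSet ⊆ Finset.Icc 1 (m * t - 2) := by
    intro x hx
    rw [Finset.mem_Icc]
    refine ⟨hone x hx, ?_⟩
    by_contra hc
    push_neg at hc
    have hx1 : m * t - 1 ≤ x := by omega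
    have hy := lam.core_step (t := m * t - 1) (by omega) hcmt hx hx1
    have hy1 : 1 ≤ x - (m * t - 1) := hone _ hy
    have hxmt : m * t ≤ x := by omega
    have hz := lam.core_iter htpos hct hx m (by omega)
    have : x - m * t + 1 = x - (m * t - 1) := by omega
    exact lam.not_consec hd hz (by rwa [this])
  refine ⟨hsub, ?_, ?_, ?_⟩
  · -- n_i ≤ m for 1 ≤ i ≤ t-2
    intro i hi1 hi2
    unfold Partn.nFn
    have hcomm : t * m = m * t := Nat.mul_comm t m
    have hle := Finset.card_le_card_of_injOn (fun x => x / t)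
      (s := lam.betaSet.filter (fun x => x % t = i)) (t := Finset.range m) ?_ ?_
    · simpa using hle
    · intro x hx
      rw [Finset.mem_coe, Finset.mem_filter] at hx
      have hxm := hsub hx.1
      rw [Finset.mem_Icc] at hxm
      rw [Finset.mem_coe, Finset.mem_range]
      exact Nat.div_lt_of_lt_mul (by omega)
    · intro x hx y hy he
      simp only [Finset.coe_filter, Set.mem_setOf_eq] at hx hy
      simp only at he
      have h1 := Nat.mod_add_div x t
      have h2 := Nat.mod_add_div y t
      rw [hx.2] at h1
      rw [hy.2, ← he] at h2
      omega
  · -- n_{t-1} ≤ m - 1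
    unfold Partn.nFn
    have hcomm : t * m = m * t := Nat.mul_comm t m
    have hle := Finset.card_le_card_of_injOn (fun x => x / t)
      (s := lam.betaSet.filter (fun x => x % t = t - 1)) (t := Finset.range (m - 1)) ?_ ?_
    · simpa using hle
    · intro x hx
      rw [Finset.mem_coe, Finset.mem_filter] at hx
      have hxm := hsub hx.1
      rw [Finset.mem_Icc] at hxm
      rw [Finset.mem_coe, Finset.mem_range]
      have h1 := Nat.mod_add_div x t
      rw [hx.2] at h1
      by_contra hq
      push_neg at hq
      have h3 : t * (m - 1) ≤ t * (x / t) := Nat.mul_le_mul_left t hq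
      have h4 : t * (m - 1) = t * m - t * 1 := Nat.mul_sub t m 1
      rw [Nat.mul_one] at h4
      omega
    · intro x hx y hy he
      simp only [Finset.coe_filter, Set.mem_setOf_eq] at hx hy
      simp only at he
      have h1 := Nat.mod_add_div x t
      have h2 := Nat.mod_add_div y t
      rw [hx.2] at h1
      rw [hy.2, ← he] at h2
      omega
  · -- products vanish
    intro i hi1 hi2
    by_contra hc
    have h1 : Partn.nFn t i lam ≠ 0 := fun h => hc (by rw [h, Nat.zero_mul])
    have h2 : Partn.nFn t (i + 1) lam ≠ 0 := fun h => hc (by rw [h, Nat.mul_zero])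
    unfold Partn.nFn at h1 h2
    rw [Finset.card_ne_zero] at h1 h2
    obtain ⟨x, hx⟩ := h1
    obtain ⟨y, hy⟩ := h2
    rw [Finset.mem_filter] at hx hy
    have hxb := lam.core_iter htpos hct hx.1 (x / t) (Nat.div_mul_le_self x t)
    have hyb := lam.core_iter htpos hct hy.1 (y / t) (Nat.div_mul_le_self y t)
    have e1 : x - x / t * t = i := by
      have h := Nat.mod_add_div x t
      have hco : x / t * t = t * (x / t) := Nat.mul_comm _ _
      rw [hx.2] at h
      omega
    have e2 : y - y / t * t = i + 1 := by
      have h := Nat.mod_add_div y t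
      have hco : y / t * t = t * (y / t) := Nat.mul_comm _ _
      rw [hy.2] at h
      omega
    rw [e1] at hxb
    rw [e2] at hyb
    exact lam.not_consec hd hxb hyb
end

section
/- Let t ≥ 2 and m ≥ 2 be integers, and let λ be a (t, mt−1)-core partition with distinct parts whose size is maximal among all (t, mt−1)-core partitions with distinct parts. Then n_{t−1}(λ) = 0 or n_{t−1}(λ) = m−1, and for every 1 ≤ i ≤ t−2, n_i(λ) = 0 or n_i(λ) = m. -/
open Finset
namespace PartnAux
open Partn

/-- β-number function. -/
def bfun (l : Partn) (i : ℕ) : ℕ := l.parts.getD i 0 + (l.parts.length - 1 - i)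

lemma getD_anti (l : Partn) {i j : ℕ} (hij : i ≤ j) (hj : j < l.parts.length) :
    l.parts.getD j 0 ≤ l.parts.getD i 0 := by
  rcases lt_or_eq_of_le hij with h | rfl
  · have := List.pairwise_iff_get.mp l.sorted ⟨i, lt_trans h hj⟩ ⟨j, hj⟩ h
    rwa [List.getD_eq_getElem _ _ (lt_trans h hj), List.getD_eq_getElem _ _ hj]
  · exact le_refl _

lemma getD_pos (l : Partn) {i : ℕ} (hi : i < l.parts.length) : 1 ≤ l.parts.getD i 0 := by
  rw [List.getD_eq_getElem _ _ hi]
  exact l.pos _ (List.getElem_mem _)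

lemma getD_strict (l : Partn) (hd : l.DistinctParts) {i j : ℕ} (hij : i < j)
    (hj : j < l.parts.length) : l.parts.getD j 0 < l.parts.getD i 0 := by
  have := List.pairwise_iff_get.mp hd ⟨i, lt_trans hij hj⟩ ⟨j, hj⟩ hij
  rwa [List.getD_eq_getElem _ _ (lt_trans hij hj), List.getD_eq_getElem _ _ hj]

lemma mem_betaSet {l : Partn} {x : ℕ} :
    x ∈ l.betaSet ↔ ∃ i, i < l.parts.length ∧ bfun l i = x := by
  simp [betaSet, bfun, Finset.mem_image, Finset.mem_range]

lemma bfun_add_le (l : Partn) {i j : ℕ} (hij : i ≤ j) (hj : j < l.parts.length) :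
    bfun l j + (j - i) ≤ bfun l i := by
  have h1 := getD_anti l hij hj
  unfold bfun; omega

lemma bfun_injOn (l : Partn) :
    Set.InjOn (fun i => l.parts.getD i 0 + (l.parts.length - 1 - i))
      (Finset.range l.parts.length) := by
  intro a ha b hb hab
  simp only [Finset.mem_coe, Finset.mem_range] at ha hb
  have hab' : l.parts.getD a 0 + (l.parts.length - 1 - a)
      = l.parts.getD b 0 + (l.parts.length - 1 - b) := hab
  by_contra hne
  rcases lt_or_gt_of_ne hne with h | h
  · have := bfun_add_le l (le_of_lt h) hb
    unfold bfun at this; omega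
  · have := bfun_add_le l (le_of_lt h) ha
    unfold bfun at this; omega

lemma card_betaSet (l : Partn) : l.betaSet.card = l.parts.length := by
  rw [betaSet, Finset.card_image_of_injOn (bfun_injOn l), Finset.card_range]

lemma length_filter_eq (xs : List ℕ) (p : ℕ → Bool) :
    (xs.filter p).length
      = ((Finset.range xs.length).filter (fun i => p (xs.getD i 0) = true)).card := by
  induction xs with
  | nil => simp
  | cons a tl ih =>
    rw [Finset.card_filter, List.length_cons, Finset.sum_range_succ']
    simp only [List.getD_cons_succ, List.getD_cons_zero, List.filter_cons]
    rw [Finset.card_filter] at ih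
    by_cases h : p a <;> simp [h, ih]

lemma colLen_eq (l : Partn) (j : ℕ) :
    l.colLen j = ((Finset.range l.parts.length).filter (fun k => j ≤ l.parts.getD k 0)).card := by
  rw [colLen, length_filter_eq]
  congr 1
  ext k
  simp

lemma colLen_le (l : Partn) (j : ℕ) : l.colLen j ≤ l.parts.length := by
  rw [colLen_eq]
  calc _ ≤ (Finset.range l.parts.length).card := Finset.card_filter_le _ _
    _ = _ := Finset.card_range _

lemma colLen_anti (l : Partn) {j j' : ℕ} (h : j ≤ j') : l.colLen j' ≤ l.colLen j := by
  rw [colLen_eq, colLen_eq]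
  apply Finset.card_le_card
  intro k hk
  simp only [Finset.mem_filter, Finset.mem_range] at hk ⊢
  exact ⟨hk.1, le_trans h hk.2⟩

lemma colLen_one (l : Partn) : l.colLen 1 = l.parts.length := by
  rw [colLen_eq]
  rw [Finset.filter_true_of_mem, Finset.card_range]
  intro k hk
  exact getD_pos l (Finset.mem_range.mp hk)

lemma le_colLen (l : Partn) {i j : ℕ} (hi : i < l.parts.length) (hj : j ≤ l.parts.getD i 0) :
    i + 1 ≤ l.colLen j := by
  rw [colLen_eq]
  calc i + 1 = (Finset.range (i+1)).card := (Finset.card_range _).symm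
    _ ≤ _ := by
        apply Finset.card_le_card
        intro k hk
        simp only [Finset.mem_range] at hk
        simp only [Finset.mem_filter, Finset.mem_range]
        exact ⟨lt_of_lt_of_le hk hi, le_trans hj (getD_anti l (by omega) hi)⟩

lemma colLen_le_of (l : Partn) {k j : ℕ} (hk : k < l.parts.length)
    (h : l.parts.getD k 0 < j) : l.colLen j ≤ k := by
  rw [colLen_eq]
  calc _ ≤ (Finset.range k).card := by
        apply Finset.card_le_card
        intro idx hidx
        simp only [Finset.mem_filter, Finset.mem_range] at hidx ⊢
        by_contra hc
        push_neg at hc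
        have := getD_anti l hc hidx.1
        omega
    _ = k := Finset.card_range _

/-- complement position function -/
def yfun (l : Partn) (j : ℕ) : ℕ := l.parts.length - 1 + j - l.colLen j

lemma hook_add (l : Partn) {i j : ℕ} (hi : i < l.parts.length) (hj1 : 1 ≤ j)
    (hj2 : j ≤ l.parts.getD i 0) : l.hook i j + yfun l j = bfun l i := by
  have h1 := le_colLen l hi hj2
  have h2 := colLen_le l j
  unfold hook yfun bfun
  omega

lemma hook_pos (l : Partn) (i j : ℕ) : 1 ≤ l.hook i j := by unfold hook; omega

lemma yfun_not_mem (l : Partn) {j : ℕ} (hj : 1 ≤ j) : yfun l j ∉ l.betaSet := by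
  intro hmem
  obtain ⟨k, hk, hbk⟩ := mem_betaSet.mp hmem
  rcases le_or_gt j (l.parts.getD k 0) with h | h
  · have h1 := le_colLen l hk h
    have h2 := colLen_le l j
    unfold bfun yfun at hbk
    omega
  · have h1 := colLen_le_of l hk h
    unfold bfun yfun at hbk
    omega

lemma yfun_lt (l : Partn) {j j' : ℕ} (h1 : 1 ≤ j) (h : j < j') : yfun l j < yfun l j' := by
  have h2 : l.colLen j' ≤ l.colLen j := colLen_anti l (le_of_lt h)
  have h3 : l.colLen j ≤ l.parts.length := colLen_le l j
  unfold yfun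
  omega

lemma beta_inter (l : Partn) {i : ℕ} (hi : i < l.parts.length) :
    l.betaSet ∩ Finset.range (bfun l i)
      = (Finset.Ico (i+1) l.parts.length).image (bfun l) := by
  ext x
  simp only [Finset.mem_inter, Finset.mem_range, Finset.mem_image, Finset.mem_Ico]
  constructor
  · rintro ⟨hx, hlt⟩
    obtain ⟨k, hk, rfl⟩ := mem_betaSet.mp hx
    refine ⟨k, ⟨?_, hk⟩, rfl⟩
    by_contra hc
    push_neg at hc
    have := bfun_add_le l (by omega : k ≤ i) hi
    omega
  · rintro ⟨k, ⟨hk1, hk2⟩, rfl⟩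
    refine ⟨mem_betaSet.mpr ⟨k, hk2, rfl⟩, ?_⟩
    have := bfun_add_le l (by omega : i ≤ k) hk2
    omega

lemma yfun_image (l : Partn) {i : ℕ} (hi : i < l.parts.length) :
    (Finset.Icc 1 (l.parts.getD i 0)).image (yfun l)
      = Finset.range (bfun l i) \ l.betaSet := by
  have hsub : (Finset.Icc 1 (l.parts.getD i 0)).image (yfun l)
      ⊆ Finset.range (bfun l i) \ l.betaSet := by
    intro x hx
    obtain ⟨j, hj, rfl⟩ := Finset.mem_image.mp hx
    rw [Finset.mem_Icc] at hj
    have hadd := hook_add l hi hj.1 hj.2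
    have hpos := hook_pos l i j
    rw [Finset.mem_sdiff, Finset.mem_range]
    exact ⟨by omega, yfun_not_mem l hj.1⟩
  apply Finset.eq_of_subset_of_card_le hsub
  have hc1 : ((Finset.Icc 1 (l.parts.getD i 0)).image (yfun l)).card = l.parts.getD i 0 := by
    rw [Finset.card_image_of_injOn, Nat.card_Icc]
    · omega
    · intro a ha b hb hab
      simp only [Finset.mem_coe, Finset.mem_Icc] at ha hb
      by_contra hne
      rcases lt_or_gt_of_ne hne with h | h
      · have := yfun_lt l ha.1 h; omega
      · have := yfun_lt l hb.1 h; omega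
  have hc2 : (Finset.range (bfun l i) \ l.betaSet).card = l.parts.getD i 0 := by
    have h1 : (Finset.range (bfun l i) \ l.betaSet).card
        + (Finset.range (bfun l i) ∩ l.betaSet).card = bfun l i := by
      rw [Finset.card_sdiff_add_card_inter, Finset.card_range]
    rw [Finset.inter_comm, beta_inter l hi] at h1
    have h2 : ((Finset.Ico (i+1) l.parts.length).image (bfun l)).card
        = l.parts.length - (i+1) := by
      rw [Finset.card_image_of_injOn, Nat.card_Ico]
      intro a ha b hb hab
      simp only [Finset.mem_coe, Finset.mem_Ico] at ha hb
      by_contra hne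
      rcases lt_or_gt_of_ne hne with h | h
      · have := bfun_add_le l (le_of_lt h) hb.2; omega
      · have := bfun_add_le l (le_of_lt h) ha.2; omega
    rw [h2] at h1
    unfold bfun at h1 ⊢
    omega
  omega

lemma mem_sub_of_isCore {l : Partn} {d : ℕ} (hd : 1 ≤ d) (hcore : l.IsCore d) {x : ℕ}
    (hx : x ∈ l.betaSet) (hdx : d ≤ x) : x - d ∈ l.betaSet := by
  by_contra hns
  obtain ⟨i, hi, rfl⟩ := mem_betaSet.mp hx
  have hmem : bfun l i - d ∈ Finset.range (bfun l i) \ l.betaSet := by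
    rw [Finset.mem_sdiff, Finset.mem_range]
    exact ⟨by omega, hns⟩
  rw [← yfun_image l hi] at hmem
  obtain ⟨j, hj, hyj⟩ := Finset.mem_image.mp hmem
  rw [Finset.mem_Icc] at hj
  have hadd := hook_add l hi hj.1 hj.2
  have hhook : l.hook i j = d := by omega
  exact hcore i j hi hj.1 hj.2 (hhook ▸ dvd_refl d)

lemma isCore_of_closed {l : Partn} {d : ℕ} (hd : 0 < d)
    (h : ∀ x ∈ l.betaSet, d ≤ x → x - d ∈ l.betaSet) : l.IsCore d := by
  have key : ∀ q x, x ∈ l.betaSet → q * d ≤ x → x - q * d ∈ l.betaSet := by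
    intro q
    induction q with
    | zero => intro x hx _; simpa using hx
    | succ q ih =>
      intro x hx hqx
      have hqx' : q * d + d ≤ x := by rw [Nat.succ_mul] at hqx; omega
      have h1 : x - d ∈ l.betaSet := h x hx (by omega)
      have h2 := ih (x - d) h1 (by omega)
      have : x - d - q * d = x - (q + 1) * d := by rw [Nat.succ_mul]; omega
      rwa [this] at h2
  intro i j hi hj1 hj2 hdvd
  obtain ⟨q, hq⟩ := hdvd
  rw [mul_comm] at hq
  have hpos := hook_pos l i j
  have hq1 : 1 ≤ q := by
    rcases Nat.eq_zero_or_pos q with rfl | h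
    · omega
    · exact h
  have hadd := hook_add l hi hj1 hj2
  have hbmem : bfun l i ∈ l.betaSet := mem_betaSet.mpr ⟨i, hi, rfl⟩
  have hk := key q (bfun l i) hbmem (by omega)
  have : bfun l i - q * d = yfun l j := by omega
  rw [this] at hk
  exact yfun_not_mem l hj1 hk

lemma not_consec {l : Partn} (hD : l.DistinctParts) {x : ℕ} (hx : x ∈ l.betaSet)
    (hx1 : x + 1 ∈ l.betaSet) : False := by
  obtain ⟨k', hk', hb'⟩ := mem_betaSet.mp hx
  obtain ⟨k, hk, hb⟩ := mem_betaSet.mp hx1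
  have hlt : k < k' := by
    rcases le_or_gt k' k with h | h
    · have := bfun_add_le l h hk
      rcases eq_or_lt_of_le h with rfl | h2
      · omega
      · omega
    · exact h
  have h1 := bfun_add_le l (le_of_lt hlt) hk'
  have hkk : k' = k + 1 := by omega
  subst hkk
  have h2 := getD_strict l hD (by omega : k < k + 1) hk'
  unfold bfun at hb hb'
  omega

lemma sum_betaSet (l : Partn) :
    2 * ∑ x ∈ l.betaSet, x = 2 * l.size + l.parts.length * (l.parts.length - 1) := by
  rw [betaSet, Finset.sum_image]
  · have h1 : ∑ i ∈ Finset.range l.parts.length, (l.parts.getD i 0 + (l.parts.length - 1 - i))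
        = (∑ i ∈ Finset.range l.parts.length, l.parts.getD i 0)
          + ∑ i ∈ Finset.range l.parts.length, (l.parts.length - 1 - i) := by
      rw [Finset.sum_add_distrib]
    have h2 : ∑ i ∈ Finset.range l.parts.length, l.parts.getD i 0 = l.size := by
      rw [size]
      have : ∀ xs : List ℕ, ∑ i ∈ Finset.range xs.length, xs.getD i 0 = xs.sum := by
        intro xs
        induction xs with
        | nil => simp
        | cons a tl ih =>
          rw [List.length_cons, Finset.sum_range_succ']
          simp only [List.getD_cons_succ, List.getD_cons_zero, List.sum_cons, ih]
          omega
      exact this _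
    have h3 : ∑ i ∈ Finset.range l.parts.length, (l.parts.length - 1 - i)
        = ∑ i ∈ Finset.range l.parts.length, i := by
      exact Finset.sum_range_reflect (fun i => i) l.parts.length
    have h4 := Finset.sum_range_id_mul_two l.parts.length
    rw [h1, h2, h3]
    omega
  · exact bfun_injOn l

section OfBeta

variable (S : Finset ℕ)

/-- ascending sorted list of S -/
def asc : List ℕ := S.sort (· ≤ ·)

lemma asc_length : (asc S).length = S.card := Finset.length_sort _

lemma asc_mem {u : ℕ} (hu : u < S.card) : (asc S).getD u 0 ∈ S := by
  have hu' : u < (asc S).length := by rw [asc_length]; exact hu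
  rw [List.getD_eq_getElem _ _ hu']
  have := List.getElem_mem hu'
  rwa [← Finset.mem_sort (α := ℕ) (· ≤ ·)]

lemma asc_strict {u v : ℕ} (huv : u < v) (hv : v < S.card) :
    (asc S).getD u 0 < (asc S).getD v 0 := by
  have hv' : v < (asc S).length := by rw [asc_length]; exact hv
  have hu' : u < (asc S).length := lt_trans (by omega) hv'
  have := List.pairwise_iff_get.mp (Finset.sortedLT_sort S).pairwise ⟨u, hu'⟩ ⟨v, hv'⟩ huv
  rwa [List.getD_eq_getElem _ _ hu', List.getD_eq_getElem _ _ hv']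

lemma asc_surj {x : ℕ} (hx : x ∈ S) : ∃ u, u < S.card ∧ (asc S).getD u 0 = x := by
  have : x ∈ asc S := by unfold asc; rwa [Finset.mem_sort]
  obtain ⟨u, hux⟩ := List.mem_iff_get.mp this
  refine ⟨u, by rw [← asc_length]; exact u.2, ?_⟩
  rw [List.getD_eq_getElem _ _ u.2]
  simpa using hux

lemma asc_ge (h0 : 0 ∉ S) {u : ℕ} (hu : u < S.card) : u + 1 ≤ (asc S).getD u 0 := by
  induction u with
  | zero =>
    have := asc_mem S hu
    have hne : (asc S).getD 0 0 ≠ 0 := fun h => h0 (h ▸ this)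
    omega
  | succ u ih =>
    have h1 := ih (by omega)
    have h2 := asc_strict S (show u < u + 1 by omega) hu
    omega

lemma asc_gap (hgap : ∀ x ∈ S, x + 1 ∉ S) {u v : ℕ} (huv : u < v) (hv : v < S.card) :
    (asc S).getD u 0 + 2 * (v - u) ≤ (asc S).getD v 0 := by
  induction v with
  | zero => omega
  | succ v ih =>
    have hstep : (asc S).getD v 0 + 2 ≤ (asc S).getD (v+1) 0 := by
      have h1 := asc_strict S (show v < v + 1 by omega) hv
      have h2 : (asc S).getD (v+1) 0 ≠ (asc S).getD v 0 + 1 := by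
        intro h
        exact hgap _ (asc_mem S (by omega)) (h ▸ asc_mem S hv)
      omega
    rcases Nat.lt_or_ge u v with h | h
    · have := ih h (by omega)
      omega
    · have huv' : u = v := by omega
      subst huv'
      omega

/-- The partition whose β-set is `S` (requires `0 ∉ S`). -/
def ofBeta (h0 : 0 ∉ S) : Partn where
  parts := (List.range S.card).map
    (fun k => (asc S).getD (S.card - 1 - k) 0 - (S.card - 1 - k))
  pos := by
    intro p hp
    obtain ⟨k, hk, rfl⟩ := List.mem_map.mp hp
    rw [List.mem_range] at hk
    have := asc_ge S h0 (show S.card - 1 - k < S.card by omega)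
    omega
  sorted := by
    apply List.pairwise_iff_get.mpr
    intro i j hij
    have hj : (j : ℕ) < S.card := by
      have := j.2; simpa using this
    have hi : (i : ℕ) < S.card := lt_trans hij hj
    rw [List.get_eq_getElem, List.get_eq_getElem, List.getElem_map, List.getElem_map,
      List.getElem_range, List.getElem_range]
    have h1 : S.card - 1 - (j:ℕ) < S.card - 1 - (i:ℕ) ∨ S.card - 1 - (j:ℕ) = S.card - 1 - (i:ℕ) := by
      omega
    rcases h1 with h | h
    · have := asc_strict S h (by omega)
      have h2 := asc_ge S h0 (show S.card - 1 - (i:ℕ) < S.card by omega)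
      -- need: A_{c-1-j} - (c-1-j) ≤ A_{c-1-i} - (c-1-i)
      have h3 : ∀ u v, u < v → v < S.card →
          (asc S).getD u 0 - u ≤ (asc S).getD v 0 - v := by
        intro u v huv hv
        have hstep : ∀ w, w + 1 < S.card →
            (asc S).getD w 0 - w ≤ (asc S).getD (w+1) 0 - (w+1) := by
          intro w hw
          have := asc_strict S (show w < w + 1 by omega) hw
          omega
        clear h h2 this
        induction v with
        | zero => omega
        | succ v ih =>
          rcases Nat.lt_or_ge u v with h | h
          · exact le_trans (ih h (by omega)) (hstep v hv)
          · have : u = v := by omega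
            subst this
            exact hstep u hv
      exact h3 _ _ h (by omega)
    · rw [h]

lemma ofBeta_length (h0 : 0 ∉ S) : (ofBeta S h0).parts.length = S.card := by
  rw [ofBeta, List.length_map, List.length_range]

lemma ofBeta_getD (h0 : 0 ∉ S) {k : ℕ} (hk : k < S.card) :
    (ofBeta S h0).parts.getD k 0 = (asc S).getD (S.card - 1 - k) 0 - (S.card - 1 - k) := by
  have hk' : k < (ofBeta S h0).parts.length := by rw [ofBeta_length]; exact hk
  rw [List.getD_eq_getElem _ _ hk']
  simp only [ofBeta, List.getElem_map, List.getElem_range]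

lemma ofBeta_betaSet (h0 : 0 ∉ S) : (ofBeta S h0).betaSet = S := by
  ext x
  rw [mem_betaSet]
  constructor
  · rintro ⟨i, hi, rfl⟩
    rw [ofBeta_length] at hi
    unfold bfun
    rw [ofBeta_getD S h0 hi, ofBeta_length]
    have h1 := asc_ge S h0 (show S.card - 1 - i < S.card by omega)
    have : (asc S).getD (S.card - 1 - i) 0 - (S.card - 1 - i) + (S.card - 1 - i)
        = (asc S).getD (S.card - 1 - i) 0 := by omega
    rw [this]
    exact asc_mem S (by omega)
  · intro hx
    obtain ⟨u, hu, hux⟩ := asc_surj S hx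
    refine ⟨S.card - 1 - u, by rw [ofBeta_length]; omega, ?_⟩
    unfold bfun
    rw [ofBeta_length, ofBeta_getD S h0 (by omega)]
    have hsimp : S.card - 1 - (S.card - 1 - u) = u := by omega
    rw [hsimp]
    have h1 := asc_ge S h0 hu
    omega

lemma ofBeta_distinct (h0 : 0 ∉ S) (hgap : ∀ x ∈ S, x + 1 ∉ S) :
    (ofBeta S h0).DistinctParts := by
  apply List.pairwise_iff_get.mpr
  intro i j hij
  have hj : (j : ℕ) < S.card := lt_of_lt_of_le j.2 (le_of_eq (ofBeta_length S h0))
  have hi : (i : ℕ) < S.card := lt_trans hij hj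
  rw [List.get_eq_getElem, List.get_eq_getElem]
  have hi' : (i:ℕ) < (ofBeta S h0).parts.length :=
    lt_of_lt_of_le hi (le_of_eq (ofBeta_length S h0).symm)
  have hj' : (j:ℕ) < (ofBeta S h0).parts.length :=
    lt_of_lt_of_le hj (le_of_eq (ofBeta_length S h0).symm)
  rw [← List.getD_eq_getElem _ 0 hi', ← List.getD_eq_getElem _ 0 hj']
  rw [ofBeta_getD S h0 hi, ofBeta_getD S h0 hj]
  have hlt : S.card - 1 - (j:ℕ) < S.card - 1 - (i:ℕ) := by omega
  have := asc_gap S hgap hlt (by omega)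
  have h1 := asc_ge S h0 (show S.card - 1 - (j:ℕ) < S.card by omega)
  omega

end OfBeta

section Chains

/-- The chain `{i, i + t, ..., i + (c-1)t}`. -/
def chainF (t i c : ℕ) : Finset ℕ := (Finset.range c).image (fun a => i + a * t)

lemma mem_chainF {t i c x : ℕ} : x ∈ chainF t i c ↔ ∃ a, a < c ∧ i + a * t = x := by
  simp [chainF]

lemma card_chainF {t : ℕ} (ht : 1 ≤ t) (i c : ℕ) : (chainF t i c).card = c := by
  rw [chainF, Finset.card_image_of_injOn, Finset.card_range]
  intro a _ b _ hab
  have hab' : i + a * t = i + b * t := hab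
  by_contra hne
  rcases lt_or_gt_of_ne hne with h | h <;> nlinarith

lemma sum_chainF {t : ℕ} (ht : 1 ≤ t) (i c : ℕ) :
    2 * ∑ x ∈ chainF t i c, x = 2 * (c * i) + c * (c - 1) * t := by
  rw [chainF, Finset.sum_image]
  · rw [Finset.sum_add_distrib, Finset.sum_const, Finset.card_range, smul_eq_mul,
      ← Finset.sum_mul, Nat.mul_add]
    congr 1
    rw [show 2 * ((∑ a ∈ Finset.range c, a) * t) = ((∑ a ∈ Finset.range c, a) * 2) * t by ring,
      Finset.sum_range_id_mul_two]
  · intro a _ b _ hab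
    have hab' : i + a * t = i + b * t := hab
    by_contra hne
    rcases lt_or_gt_of_ne hne with h | h <;> nlinarith

lemma mod_chain {t i a : ℕ} (hi : i < t) : (i + a * t) % t = i := by
  rw [Nat.add_mul_mod_self_right, Nat.mod_eq_of_lt hi]

lemma div_chain {t i a : ℕ} (hi : i < t) (ht : 0 < t) : (i + a * t) / t = a := by
  rw [Nat.add_mul_div_right _ _ ht, Nat.div_eq_of_lt hi]
  omega

/-- A profile assembled into a finite set. -/
def Sprof (t : ℕ) (ν : ℕ → ℕ) : Finset ℕ :=
  (Finset.range t).biUnion (fun i => chainF t i (ν i))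

lemma mem_Sprof {t x : ℕ} {ν : ℕ → ℕ} :
    x ∈ Sprof t ν ↔ ∃ i, i < t ∧ ∃ a, a < ν i ∧ i + a * t = x := by
  simp [Sprof, mem_chainF, Finset.mem_biUnion]

lemma Sprof_fiber {t j : ℕ} {ν : ℕ → ℕ} (hj : j < t) (ht : 0 < t) :
    (Sprof t ν).filter (fun x => x % t = j) = chainF t j (ν j) := by
  ext x
  rw [Finset.mem_filter, mem_Sprof, mem_chainF]
  constructor
  · rintro ⟨⟨i, hi, a, ha, rfl⟩, hmod⟩
    rw [mod_chain hi] at hmod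
    subst hmod
    exact ⟨a, ha, rfl⟩
  · rintro ⟨a, ha, rfl⟩
    exact ⟨⟨j, hj, a, ha, rfl⟩, mod_chain hj⟩

end Chains

section Structure

variable {l : Partn} {t : ℕ}

/-- downward closure within a residue class. -/
lemma down_closed (ht : 2 ≤ t) (hcore : l.IsCore t) :
    ∀ x, x ∈ l.betaSet → ∀ y, y ≤ x → y % t = x % t → y ∈ l.betaSet := by
  intro x
  induction x using Nat.strong_induction_on with
  | _ x ih =>
    intro hx y hy hm
    rcases eq_or_lt_of_le hy with rfl | hlt
    · exact hx
    · have e1 := Nat.div_add_mod x t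
      have e2 := Nat.div_add_mod y t
      have hdivlt : y / t < x / t := by
        by_contra hc
        push_neg at hc
        have := Nat.mul_le_mul_left t hc
        omega
      have hyt : y + t ≤ x := by
        have h1 : y / t + 1 ≤ x / t := hdivlt
        have := Nat.mul_le_mul_left t h1
        rw [Nat.mul_add, Nat.mul_one] at this
        omega
      have hxt : x - t ∈ l.betaSet := mem_sub_of_isCore (by omega) hcore hx (by omega)
      have hmod : (x - t) % t = x % t := by
        conv_rhs => rw [show x = (x - t) + t by omega]
        rw [Nat.add_mod_right]
      exact ih (x - t) (by omega) hxt y (by omega) (hm.trans hmod.symm)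

end Structure

section Fibers

variable {l : Partn} {t : ℕ}

lemma zero_not_mem (l : Partn) : 0 ∉ l.betaSet := by
  intro h
  obtain ⟨i, hi, hb⟩ := mem_betaSet.mp h
  have := getD_pos l hi
  unfold bfun at hb
  omega

lemma no_mult (ht : 2 ≤ t) (hcore : l.IsCore t) : ∀ q, q * t ∉ l.betaSet := by
  intro q
  induction q with
  | zero => simpa using zero_not_mem l
  | succ q ih =>
    intro h
    have h1 : (q + 1) * t - t ∈ l.betaSet :=
      mem_sub_of_isCore (by omega) hcore h (by nlinarith)
    have : (q + 1) * t - t = q * t := by rw [Nat.add_mul, Nat.one_mul]; omega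
    rw [this] at h1
    exact ih h1

lemma fiber_struct (ht : 2 ≤ t) (hcore : l.IsCore t) {i : ℕ} (hi : i < t) :
    l.betaSet.filter (fun x => x % t = i)
      = chainF t i ((l.betaSet.filter (fun x => x % t = i)).card) := by
  rcases Nat.eq_zero_or_pos i with rfl | hi1
  · have hempty : l.betaSet.filter (fun x => x % t = 0) = ∅ := by
      rw [Finset.filter_eq_empty_iff]
      intro x hx hmod
      have : x = (x / t) * t := by
        have := Nat.div_add_mod' x t
        omega
      exact no_mult ht hcore (x / t) (this ▸ hx)
    rw [hempty]
    simp [chainF]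
  · set T := l.betaSet.filter (fun x => x % t = i) with hT
    have key1 : ∀ x ∈ T, i + (x / t) * t = x := by
      intro x hx
      rw [hT, Finset.mem_filter] at hx
      have := Nat.div_add_mod' x t
      have hmod := hx.2
      omega
    have Ddown : ∀ a', ∀ x ∈ T, a' ≤ x / t → i + a' * t ∈ T := by
      intro a' x hx ha'
      have hxS : x ∈ l.betaSet := (Finset.mem_filter.mp hx).1
      have hle : i + a' * t ≤ x := by
        have h1 : a' * t ≤ (x / t) * t := Nat.mul_le_mul_right t ha'
        have := key1 x hx
        omega
      have hmem : i + a' * t ∈ l.betaSet := by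
        apply down_closed ht hcore x hxS _ hle
        rw [mod_chain hi]
        exact ((Finset.mem_filter.mp hx).2).symm
      rw [hT, Finset.mem_filter]
      exact ⟨hmem, mod_chain hi⟩
    set D := T.image (fun x => x / t) with hD
    have Dcard : D.card = T.card := by
      rw [hD]
      apply Finset.card_image_of_injOn
      intro x hx y hy hxy
      have h1 := key1 x hx
      have h2 := key1 y hy
      have hxy' : x / t = y / t := hxy
      have h3 : (x / t) * t = (y / t) * t := by rw [hxy']
      omega
    have Drange : D = Finset.range D.card := by
      apply Finset.eq_of_subset_of_card_le
      · intro a ha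
        rw [Finset.mem_range]
        have hsub : Finset.range (a + 1) ⊆ D := by
          intro a' ha'
          rw [Finset.mem_range] at ha'
          obtain ⟨x, hx, hxa⟩ := Finset.mem_image.mp ha
          have := Ddown a' x hx (by omega)
          rw [hD, Finset.mem_image]
          exact ⟨i + a' * t, this, div_chain hi (by omega)⟩
        calc a + 1 = (Finset.range (a+1)).card := (Finset.card_range _).symm
          _ ≤ D.card := Finset.card_le_card hsub
      · rw [Finset.card_range]
    ext x
    rw [mem_chainF]
    constructor
    · intro hx
      refine ⟨x / t, ?_, key1 x hx⟩
      have : x / t ∈ D := Finset.mem_image.mpr ⟨x, hx, rfl⟩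
      rw [Drange, Finset.mem_range] at this
      omega
    · rintro ⟨a, ha, rfl⟩
      have : a ∈ D := by
        rw [Drange, Finset.mem_range]
        omega
      obtain ⟨x, hx, hxa⟩ := Finset.mem_image.mp this
      have h1 := key1 x hx
      have hxa' : x / t = a := hxa
      have h3 : a * t = (x / t) * t := by rw [hxa']
      rw [show i + a * t = x by omega]
      exact hx

end Fibers

section Profile

variable {l : Partn} {t : ℕ}

lemma profile_size (ht : 1 ≤ t) {ν : ℕ → ℕ}
    (hfib : ∀ i, i < t → l.betaSet.filter (fun x => x % t = i) = chainF t i (ν i)) :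
    2 * l.size + (∑ i ∈ Finset.range t, ν i) * ((∑ i ∈ Finset.range t, ν i) - 1)
      = ∑ i ∈ Finset.range t, (2 * (ν i * i) + ν i * (ν i - 1) * t) := by
  have hmaps : ∀ x ∈ l.betaSet, x % t ∈ Finset.range t :=
    fun x _ => Finset.mem_range.mpr (Nat.mod_lt _ ht)
  have hcard : l.betaSet.card = ∑ i ∈ Finset.range t, ν i := by
    rw [Finset.card_eq_sum_card_fiberwise hmaps]
    apply Finset.sum_congr rfl
    intro i hi
    rw [hfib i (Finset.mem_range.mp hi), card_chainF ht]
  have hsum : 2 * ∑ x ∈ l.betaSet, x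
      = ∑ i ∈ Finset.range t, (2 * (ν i * i) + ν i * (ν i - 1) * t) := by
    rw [← Finset.sum_fiberwise_of_maps_to hmaps (fun x => x), Finset.mul_sum]
    apply Finset.sum_congr rfl
    intro i hi
    rw [hfib i (Finset.mem_range.mp hi), sum_chainF ht]
  have hβ := sum_betaSet l
  have hlen : l.parts.length = ∑ i ∈ Finset.range t, ν i := by
    rw [← card_betaSet l, hcard]
  rw [hlen] at hβ
  omega

/-- admissible profiles -/
def Good (t m : ℕ) (ν : ℕ → ℕ) : Prop :=
  ν 0 = 0 ∧ (∀ j, j ≤ t - 1 → ν j ≤ (if j = t - 1 then m - 1 else m))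
    ∧ (∀ j, 1 ≤ j → j + 1 ≤ t - 1 → ν j = 0 ∨ ν (j + 1) = 0)

lemma pred_mul_add {k : ℕ} (t : ℕ) (hk : 1 ≤ k) : (k - 1) * t + t = k * t := by
  rw [← Nat.succ_mul]
  congr 1
  omega

lemma Sprof_zero_not_mem {m : ℕ} {ν : ℕ → ℕ} (hg : Good t m ν) : 0 ∉ Sprof t ν := by
  intro h
  obtain ⟨i, hi, a, ha, hia⟩ := mem_Sprof.mp h
  have hi0 : i = 0 := by omega
  subst hi0
  rw [hg.1] at ha
  omega

lemma Sprof_bound {m : ℕ} (ht : 2 ≤ t) (hm : 2 ≤ m) {ν : ℕ → ℕ} (hg : Good t m ν) :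
    ∀ x ∈ Sprof t ν, x < m * t - 1 := by
  intro x hx
  obtain ⟨i, hi, a, ha, rfl⟩ := mem_Sprof.mp hx
  have hcap := hg.2.1 i (by omega)
  rcases eq_or_ne i (t - 1) with hit | hit
  · rw [if_pos hit] at hcap
    -- a ≤ m - 2, x = t-1 + a*t ≤ (m-1)*t - 1
    have ha2 : a ≤ m - 2 := by omega
    have h1 : a * t ≤ (m - 2) * t := Nat.mul_le_mul_right t ha2
    have h2 : (m - 1 - 1) * t + t = (m - 1) * t := pred_mul_add t (by omega)
    have h2' : m - 1 - 1 = m - 2 := by omega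
    rw [h2'] at h2
    have h3 : (m - 1) * t + t = m * t := pred_mul_add t (by omega)
    omega
  · rw [if_neg hit] at hcap
    have ha2 : a ≤ m - 1 := by omega
    have h1 : a * t ≤ (m - 1) * t := Nat.mul_le_mul_right t ha2
    have h3 : (m - 1) * t + t = m * t := pred_mul_add t (by omega)
    omega

lemma Sprof_closed_t {m : ℕ} (ht : 2 ≤ t) {ν : ℕ → ℕ} (hg : Good t m ν) :
    ∀ x ∈ Sprof t ν, t ≤ x → x - t ∈ Sprof t ν := by
  intro x hx htx
  obtain ⟨i, hi, a, ha, rfl⟩ := mem_Sprof.mp hx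
  have ha1 : 1 ≤ a := by
    by_contra hc
    push_neg at hc
    interval_cases a
    omega
  refine mem_Sprof.mpr ⟨i, hi, a - 1, by omega, ?_⟩
  have : (a - 1) * t + t = a * t := pred_mul_add t ha1
  omega

lemma Sprof_gap {m : ℕ} (ht : 2 ≤ t) {ν : ℕ → ℕ} (hg : Good t m ν) :
    ∀ x ∈ Sprof t ν, x + 1 ∉ Sprof t ν := by
  intro x hx hx1
  obtain ⟨i, hi, a, ha, hxe⟩ := mem_Sprof.mp hx
  obtain ⟨i', hi', a', ha', hxe'⟩ := mem_Sprof.mp hx1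
  have hi0 : 1 ≤ i := by
    rcases Nat.eq_zero_or_pos i with rfl | h
    · rw [hg.1] at ha; omega
    · exact h
  have hi'0 : 1 ≤ i' := by
    rcases Nat.eq_zero_or_pos i' with rfl | h
    · rw [hg.1] at ha'; omega
    · exact h
  have hmod : (x + 1) % t = i' := by rw [← hxe', mod_chain hi']
  rcases eq_or_ne i (t - 1) with hit | hit
  · -- x + 1 = (a+1)*t, multiple of t
    have : x + 1 = (a + 1) * t := by
      rw [Nat.add_mul, Nat.one_mul]
      omega
    rw [this, Nat.mul_mod_left] at hmod
    omega
  · -- i' = i + 1, a' = a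
    have hmod2 : (x + 1) % t = i + 1 := by
      rw [← hxe, show i + a * t + 1 = (i+1) + a * t by omega, mod_chain (by omega)]
    have hii' : i' = i + 1 := by omega
    subst hii'
    have hdiv : a' = a := by
      have d1 : (x + 1) / t = a' := by rw [← hxe']; exact div_chain hi' (by omega)
      have d2 : (x + 1) / t = a := by
        rw [← hxe, show i + a * t + 1 = (i+1) + a * t by omega]
        exact div_chain (by omega) (by omega)
      omega
    subst hdiv
    have := hg.2.2 i hi0 (by omega)
    omega

lemma Sprof_fib_all {m : ℕ} (ht : 2 ≤ t) {ν : ℕ → ℕ} (hg : Good t m ν) :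
    ∀ j, j < t → (Sprof t ν).filter (fun x => x % t = j) = chainF t j (ν j) :=
  fun j hj => Sprof_fiber hj (by omega)

/-- the comparison partition attached to a good profile -/
lemma good_partn {m : ℕ} (ht : 2 ≤ t) (hm : 2 ≤ m) {ν : ℕ → ℕ} (hg : Good t m ν) :
    ∃ mu : Partn, (mu.IsCore t ∧ mu.IsCore (m * t - 1) ∧ mu.DistinctParts) ∧
      2 * mu.size + (∑ i ∈ Finset.range t, ν i) * ((∑ i ∈ Finset.range t, ν i) - 1)
        = ∑ i ∈ Finset.range t, (2 * (ν i * i) + ν i * (ν i - 1) * t) := by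
  have h0 := Sprof_zero_not_mem hg
  refine ⟨ofBeta (Sprof t ν) h0, ⟨?_, ?_, ?_⟩, ?_⟩
  · apply isCore_of_closed (by omega : 0 < t)
    rw [ofBeta_betaSet]
    exact Sprof_closed_t ht hg
  · apply isCore_of_closed (by have : 2 * 2 ≤ m * t := Nat.mul_le_mul hm ht; omega)
    rw [ofBeta_betaSet]
    intro x hx hmx
    have := Sprof_bound ht hm hg x hx
    omega
  · exact ofBeta_distinct _ h0 (fun x hx hx1 => Sprof_gap ht hg x hx hx1)
  · apply profile_size (by omega)
    intro j hj
    rw [ofBeta_betaSet]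
    exact Sprof_fib_all ht hg j hj

end Profile

lemma cast_mul_pred (a : ℕ) : ((a * (a - 1) : ℕ) : ℤ) = (a : ℤ) * ((a : ℤ) - 1) := by
  cases a with
  | zero => simp
  | succ k => push_cast [Nat.succ_sub_one]; ring

end PartnAux

open PartnAux Finset


/-- For a maximal-size `(t, mt−1)`-core partition with distinct parts, `n_(t−1)(λ)` is
`0` or `m−1`, and each `nᵢ(λ)` with `i ≤ t−2` is `0` or `m`. -/
theorem nFn_of_largest_t_mt_sub_one (t m : ℕ) (ht : 2 ≤ t) (hm : 2 ≤ m) (lam : Partn)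
    (hlam : (lam.IsCore t ∧ lam.IsCore (m * t - 1) ∧ lam.DistinctParts))
    (hmax : ∀ mu : Partn, (mu.IsCore t ∧ mu.IsCore (m * t - 1) ∧ mu.DistinctParts) → mu.size ≤ lam.size) :
    (Partn.nFn t (t - 1) lam = 0 ∨ Partn.nFn t (t - 1) lam = m - 1) ∧
      ∀ i : ℕ, 1 ≤ i → i ≤ t - 2 → Partn.nFn t i lam = 0 ∨ Partn.nFn t i lam = m := by
  obtain ⟨hc1, hc2, hdist⟩ := hlam
  set n : ℕ → ℕ := fun i => Partn.nFn t i lam with hn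
  have F0 : ∀ i, i < t → lam.betaSet.filter (fun x => x % t = i) = chainF t i (n i) :=
    fun i hi => fiber_struct ht hc1 hi
  have Fmem : ∀ i, i < t → ∀ a, a < n i → i + a * t ∈ lam.betaSet := by
    intro i hi a ha
    have h := F0 i hi
    have hmem : i + a * t ∈ chainF t i (n i) := mem_chainF.mpr ⟨a, ha, rfl⟩
    rw [← h] at hmem
    exact (Finset.mem_filter.mp hmem).1
  have hgap : ∀ x ∈ lam.betaSet, x + 1 ∉ lam.betaSet :=
    fun x hx hx1 => not_consec hdist hx hx1
  have hmt : 2 * 2 ≤ m * t := Nat.mul_le_mul hm ht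
  have hn0 : n 0 = 0 := by
    by_contra h
    have h00 := Fmem 0 (by omega) 0 (by omega)
    rw [Nat.zero_mul, Nat.add_zero] at h00
    exact zero_not_mem lam h00
  have hcapLast : n (t - 1) ≤ m - 1 := by
    by_contra h
    push_neg at h
    have hx : (t - 1) + (m - 1) * t ∈ lam.betaSet := Fmem (t - 1) (by omega) (m - 1) (by omega)
    have he : (m - 1) * t + t = m * t := pred_mul_add t (by omega)
    have hxe : (t - 1) + (m - 1) * t = m * t - 1 := by omega
    rw [hxe] at hx
    have h0 : m * t - 1 - (m * t - 1) ∈ lam.betaSet :=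
      mem_sub_of_isCore (by omega) hc2 hx (le_refl _)
    rw [Nat.sub_self] at h0
    exact zero_not_mem lam h0
  have hcapMid : ∀ i, 1 ≤ i → i ≤ t - 2 → n i ≤ m := by
    intro i hi1 hi2
    by_contra h
    push_neg at h
    have hx : i + m * t ∈ lam.betaSet := Fmem i (by omega) m (by omega)
    have hsub : i + m * t - (m * t - 1) ∈ lam.betaSet :=
      mem_sub_of_isCore (by omega) hc2 hx (by omega)
    have hxe : i + m * t - (m * t - 1) = i + 1 := by omega
    rw [hxe] at hsub
    have hi0 := Fmem i (by omega) 0 (by omega)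
    rw [Nat.zero_mul, Nat.add_zero] at hi0
    exact hgap i hi0 hsub
  have hadj : ∀ j, 1 ≤ j → j + 1 ≤ t - 1 → n j = 0 ∨ n (j + 1) = 0 := by
    intro j hj1 hj2
    by_contra h
    push_neg at h
    have h1 : j + 0 * t ∈ lam.betaSet := Fmem j (by omega) 0 (by omega)
    have h2 : (j + 1) + 0 * t ∈ lam.betaSet := Fmem (j + 1) (by omega) 0 (by omega)
    simp only [Nat.zero_mul, Nat.add_zero] at h1 h2
    exact hgap j h1 h2
  have hGood : Good t m n := by
    refine ⟨hn0, ?_, hadj⟩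
    intro j hj
    split_ifs with hjt
    · subst hjt; exact hcapLast
    · rcases Nat.eq_zero_or_pos j with rfl | hj1
      · omega
      · exact hcapMid j hj1 (by omega)
  have hsize := profile_size (l := lam) (by omega : 1 ≤ t) F0
  -- the key dichotomy
  have key : ∀ i, 1 ≤ i → i ≤ t - 1 → n i = 0 ∨ n i = (if i = t - 1 then m - 1 else m) := by
    intro i hi1 hi2
    by_contra hcon
    push_neg at hcon
    obtain ⟨hne0, hneN⟩ := hcon
    set N : ℕ := if i = t - 1 then m - 1 else m with hN
    have hcap : n i ≤ N := hGood.2.1 i hi2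
    have hlt : 0 < n i ∧ n i < N := by omega
    have hNpos : 1 ≤ N := by omega
    set ν0 : ℕ → ℕ := Function.update n i 0 with hν0
    set ν1 : ℕ → ℕ := Function.update n i N with hν1
    have hupd0 : ∀ j, j ≠ i → ν0 j = n j := fun j hj => Function.update_of_ne hj _ _
    have hupd1 : ∀ j, j ≠ i → ν1 j = n j := fun j hj => Function.update_of_ne hj _ _
    have hGood0 : Good t m ν0 := by
      refine ⟨?_, ?_, ?_⟩
      · rw [hupd0 0 (by omega), hn0]
      · intro j hj
        rcases eq_or_ne j i with rfl | hji
        · rw [hν0, Function.update_self]; omega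
        · rw [hupd0 j hji]; exact hGood.2.1 j hj
      · intro j hj1 hj2
        rcases eq_or_ne j i with rfl | hji
        · left; rw [hν0, Function.update_self]
        · rcases eq_or_ne (j + 1) i with hj1i | hj1i
          · right; rw [hj1i, hν0, Function.update_self]
          · rw [hupd0 j hji, hupd0 (j+1) hj1i]; exact hadj j hj1 hj2
    have hGood1 : Good t m ν1 := by
      refine ⟨?_, ?_, ?_⟩
      · rw [hupd1 0 (by omega), hn0]
      · intro j hj
        rcases eq_or_ne j i with rfl | hji
        · rw [hν1, Function.update_self, hN]
        · rw [hupd1 j hji]; exact hGood.2.1 j hj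
      · intro j hj1 hj2
        rcases eq_or_ne j i with rfl | hji
        · right
          rw [hupd1 (j+1) (by omega)]
          have := hadj j hj1 hj2
          omega
        · rcases eq_or_ne (j + 1) i with hj1i | hj1i
          · left
            rw [hupd1 j hji]
            have := hadj j hj1 hj2
            have : n (j + 1) ≠ 0 := by rw [hj1i]; omega
            omega
          · rw [hupd1 j hji, hupd1 (j+1) hj1i]; exact hadj j hj1 hj2
    obtain ⟨mu0, hmu0, hsize0⟩ := good_partn ht hm hGood0
    obtain ⟨mu1, hmu1, hsize1⟩ := good_partn ht hm hGood1
    have hle0 : mu0.size ≤ lam.size := hmax mu0 hmu0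
    have hle1 : mu1.size ≤ lam.size := hmax mu1 hmu1
    -- split the sums at i
    have hit : i ∈ Finset.range t := Finset.mem_range.mpr (by omega)
    set A : ℕ := ∑ j ∈ (Finset.range t).erase i, (2 * (n j * j) + n j * (n j - 1) * t) with hA
    set Lp : ℕ := ∑ j ∈ (Finset.range t).erase i, n j with hLp
    have hsplit : ∀ (ν : ℕ → ℕ), (∀ j, j ≠ i → ν j = n j) →
        (∑ j ∈ Finset.range t, ν j = ν i + Lp) ∧
        (∑ j ∈ Finset.range t, (2 * (ν j * j) + ν j * (ν j - 1) * t)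
          = (2 * (ν i * i) + ν i * (ν i - 1) * t) + A) := by
      intro ν hν
      constructor
      · rw [← Finset.add_sum_erase _ ν hit, hLp]
        congr 1
        exact Finset.sum_congr rfl (fun j hj => hν j (Finset.ne_of_mem_erase hj))
      · rw [← Finset.add_sum_erase _ _ hit, hA]
        congr 1
        exact Finset.sum_congr rfl (fun j hj => by rw [hν j (Finset.ne_of_mem_erase hj)])
    have hsplitn := hsplit n (fun _ _ => rfl)
    have hsplit0 := hsplit ν0 hupd0
    have hsplit1 := hsplit ν1 hupd1
    rw [hsplitn.1, hsplitn.2] at hsize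
    rw [hsplit0.1, hsplit0.2, hν0, Function.update_self] at hsize0
    rw [hsplit1.1, hsplit1.2, hν1, Function.update_self] at hsize1
    simp only [Nat.zero_add, Nat.mul_zero, Nat.zero_mul, Nat.add_zero] at hsize0
    -- cast everything to ℤ
    have E := congrArg (fun k : ℕ => (k : ℤ)) hsize
    have E0 := congrArg (fun k : ℕ => (k : ℤ)) hsize0
    have E1 := congrArg (fun k : ℕ => (k : ℤ)) hsize1
    push_cast [cast_mul_pred] at E E0 E1
    have hI0 : 2 * (mu0.size : ℤ) ≤ 2 * (lam.size : ℤ) := by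
      have := hle0; omega
    have hI1 : 2 * (mu1.size : ℤ) ≤ 2 * (lam.size : ℤ) := by
      have := hle1; omega
    set c : ℤ := (n i : ℤ) with hc
    set Nz : ℤ := (N : ℤ) with hNz
    set Lz : ℤ := (Lp : ℤ) with hLz
    have hc1' : 1 ≤ c := by rw [hc]; exact_mod_cast hlt.1
    have hcN : c + 1 ≤ Nz := by rw [hc, hNz]; exact_mod_cast hlt.2
    have htz : (2 : ℤ) ≤ (t : ℤ) := by exact_mod_cast ht
    have e1 : ((n i - 1 : ℕ) : ℤ) = c - 1 := by omega
    have e2 : ((N - 1 : ℕ) : ℤ) = Nz - 1 := by omega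
    have e3 : ((n i + Lp - 1 : ℕ) : ℤ) = c + Lz - 1 := by omega
    have e4 : ((N + Lp - 1 : ℕ) : ℤ) = Nz + Lz - 1 := by omega
    have e5 : Lz * ((Lp - 1 : ℕ) : ℤ) = Lz * (Lz - 1) := by
      rcases Nat.eq_zero_or_pos Lp with h | h
      · rw [hLz, h]; simp
      · have h6 : ((Lp - 1 : ℕ) : ℤ) = Lz - 1 := by omega
        rw [h6]
    rw [e1, e3] at E
    rw [e5] at E0
    rw [e2, e4] at E1
    have keyId : (Nz - c) * (2 * (lam.size : ℤ) - 2 * (mu0.size : ℤ))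
        + c * (2 * (lam.size : ℤ) - 2 * (mu1.size : ℤ))
        = -(((t : ℤ) - 1) * c * Nz * (Nz - c)) := by
      linear_combination (Nz - c) * E - (Nz - c) * E0 + c * E - c * E1
    have hpos1 : 0 ≤ (Nz - c) * (2 * (lam.size : ℤ) - 2 * (mu0.size : ℤ)) :=
      mul_nonneg (by omega) (by omega)
    have hpos2 : 0 ≤ c * (2 * (lam.size : ℤ) - 2 * (mu1.size : ℤ)) :=
      mul_nonneg (by omega) (by omega)
    have hneg : 0 < ((t : ℤ) - 1) * c * Nz * (Nz - c) := by
      apply mul_pos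
      apply mul_pos
      apply mul_pos
      · omega
      · omega
      · omega
      · omega
    linarith
  constructor
  · have := key (t - 1) (by omega) (le_refl _)
    rw [if_pos rfl] at this
    exact this
  · intro i hi1 hi2
    have := key i hi1 (by omega)
    rw [if_neg (by omega)] at this
    exact this
end
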